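/- Let h₁,…,h_N be complex numbers and fix K with 1 ≤ K ≤ N. For a nonzero complex v, let T(v,K) be a set of K indices with the K largest values of Re(h_j · conj(v)). Then T(v,K) maximizes |∑_{j∈T} h_j| over all size-K subsets T whose sum has direction v, in the following precise sense: if T* is a size-K subset maximizing |∑_{j∈T} h_j| over all size-K subsets, and f* = ∑_{j∈T*} h_j ≠ 0, then every index in T* has Re(h_j · conj(f*)) ≥ Re(h_i · conj(f*)) for every i ∉ T*. -/

import Mathlib

open Finset Complex

theorem stmt_14 {N : ℕ} (h : Fin N → ℂ) (K : ℕ) (hK1 : 1 ≤ K) (hKN : K ≤ N)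
    (Tstar : Finset (Fin N)) (hcard : Tstar.card = K)
    (hmax : ∀ T : Finset (Fin N), T.card = K →
      ‖∑ j ∈ T, h j‖ ≤ ‖∑ j ∈ Tstar, h j‖)
    (fstar : ℂ) (hf : fstar = ∑ j ∈ Tstar, h j) (hf0 : fstar ≠ 0) :
    ∀ j ∈ Tstar, ∀ i ∉ Tstar,
      (h i * (starRingEnd ℂ) fstar).re ≤ (h j * (starRingEnd ℂ) fstar).re := by
  intro j hj i hi
  by_contra hlt
  push_neg at hlt
  set T' : Finset (Fin N) := insert i (Tstar.erase j) with hT'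
  have hine : i ∉ Tstar.erase j := fun hc => hi (Finset.mem_of_mem_erase hc)
  have hcard' : T'.card = K := by
    rw [hT', Finset.card_insert_of_notMem hine, Finset.card_erase_of_mem hj, hcard]
    omega
  have hsum : ∑ k ∈ T', h k = fstar + h i - h j := by
    rw [hT', Finset.sum_insert hine, Finset.sum_erase_eq_sub hj, hf]
    ring
  have hle := hmax T' hcard'
  rw [← hf] at hle
  -- key: Re((f + hi - hj) conj f) > |f|^2, but Re(z conj f) ≤ |z||f|
  have h1 : ((∑ k ∈ T', h k) * (starRingEnd ℂ) fstar).re ≤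
      ‖∑ k ∈ T', h k‖ * ‖fstar‖ := by
    calc ((∑ k ∈ T', h k) * (starRingEnd ℂ) fstar).re
        ≤ ‖(∑ k ∈ T', h k) * (starRingEnd ℂ) fstar‖ := Complex.re_le_norm _
      _ = ‖∑ k ∈ T', h k‖ * ‖fstar‖ := by
          rw [norm_mul, Complex.norm_conj]
  have h2 : ‖fstar‖ * ‖fstar‖ <
      ((∑ k ∈ T', h k) * (starRingEnd ℂ) fstar).re := by
    rw [hsum]
    have : ((fstar + h i - h j) * (starRingEnd ℂ) fstar).re =
        (fstar * (starRingEnd ℂ) fstar).re + (h i * (starRingEnd ℂ) fstar).re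
          - (h j * (starRingEnd ℂ) fstar).re := by
      simp [sub_mul, add_mul]
    rw [this, Complex.mul_conj]
    have hns : ‖fstar‖ * ‖fstar‖ = Complex.normSq fstar := by
      rw [← Complex.sq_norm, sq]
    rw [hns]
    simp only [Complex.ofReal_re]
    linarith
  have h3 : ‖∑ k ∈ T', h k‖ * ‖fstar‖ ≤
      ‖fstar‖ * ‖fstar‖ :=
    mul_le_mul_of_nonneg_right hle (norm_nonneg _)
  linarith
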